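/- Let X be a compact Hausdorff space and let x₁, x₂, x₃ ∈ X be three distinct points. Define μ : C(X) → ℂ by μ(f) = f(x₁) if f(x₁) = f(x₂) and f(x₁) ≠ f(x₃), and μ(f) = f(x₃) otherwise. Then μ is homogeneous (μ(c·f) = c·μ(f) for all c ∈ ℂ and f ∈ C(X)), μ(1_X) = 1, μ(1_X − f) = μ(1_X) − μ(f) for every f ∈ C(X), and μ is not additive, i.e. there exist f, g ∈ C(X) with μ(f + g) ≠ μ(f) + μ(g). -/

import Mathlib

noncomputable section

/-- The diameter seminorm `ρ(f) = sup{|f(x) - f(z)| : x, z ∈ X}` on `C(X, ℂ)`. -/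
def cdiam {X : Type*} [TopologicalSpace X] (f : C(X, ℂ)) : ℝ :=
  ⨆ p : X × X, ‖f p.1 - f p.2‖

/-- A map `Δ : C(X) → C(Y)` is diameter-preserving if `ρ(Δ f - Δ g) = ρ(f - g)` for all `f, g`. -/
def DiamPreserving {X Y : Type*} [TopologicalSpace X] [TopologicalSpace Y]
    (Δ : C(X, ℂ) → C(Y, ℂ)) : Prop :=
  ∀ f g, cdiam (Δ f - Δ g) = cdiam (f - g)

/-- A map `Δ : C(X) → C(Y)` is a 2-local diameter-preserving map if for every `f, g` there is a
diameter-preserving linear bijection agreeing with `Δ` at `f` and `g`. -/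
def TwoLocalDiamPreserving {X Y : Type*} [TopologicalSpace X] [TopologicalSpace Y]
    (Δ : C(X, ℂ) → C(Y, ℂ)) : Prop :=
  ∀ f g : C(X, ℂ), ∃ T : C(X, ℂ) →ₗ[ℂ] C(Y, ℂ),
    Function.Bijective T ∧ DiamPreserving T ∧ T f = Δ f ∧ T g = Δ g

/-- Urysohn-type helper: a complex continuous function vanishing on `s` and equal to `1` on `t`. -/
lemma urysohnC {X : Type*} [TopologicalSpace X] [CompactSpace X] [T2Space X]
    {s t : Set X} (hs : IsClosed s) (ht : IsClosed t) (hd : Disjoint s t) :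
    ∃ f : C(X, ℂ), (∀ x ∈ s, f x = 0) ∧ (∀ x ∈ t, f x = 1) := by
  obtain ⟨f, hf0, hf1, -⟩ := exists_continuous_zero_one_of_isClosed hs ht hd
  refine ⟨(⟨Complex.ofReal, Complex.continuous_ofReal⟩ : C(ℝ, ℂ)).comp f, ?_, ?_⟩
  · intro x hx; simp [hf0 hx]
  · intro x hx; simp [hf1 hx]

/-- The functional `μ(f) = f(x₁)` if `f(x₁) = f(x₂)` and `f(x₁) ≠ f(x₃)`, and `μ(f) = f(x₃)`
otherwise, is homogeneous, satisfies `μ(1_X) = 1` and `μ(1_X - f) = μ(1_X) - μ(f)`, but is not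
additive. -/
theorem homogeneous_nonadditive_functional
    {X : Type*} [TopologicalSpace X] [CompactSpace X] [T2Space X]
    (x₁ x₂ x₃ : X) (h12 : x₁ ≠ x₂) (h13 : x₁ ≠ x₃) (h23 : x₂ ≠ x₃)
    (μ : C(X, ℂ) → ℂ)
    (hμ₁ : ∀ f : C(X, ℂ), (f x₁ = f x₂ ∧ f x₁ ≠ f x₃) → μ f = f x₁)
    (hμ₂ : ∀ f : C(X, ℂ), ¬(f x₁ = f x₂ ∧ f x₁ ≠ f x₃) → μ f = f x₃) :
    (∀ (c : ℂ) (f : C(X, ℂ)), μ (c • f) = c * μ f) ∧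
    μ 1 = 1 ∧
    (∀ f : C(X, ℂ), μ (1 - f) = μ 1 - μ f) ∧
    (∃ f g : C(X, ℂ), μ (f + g) ≠ μ f + μ g) := by
  have hone : μ 1 = 1 := by
    rw [hμ₂ 1 (by simp)]; simp
  refine ⟨?_, hone, ?_, ?_⟩
  · intro c f
    rcases eq_or_ne c 0 with rfl | hc
    · have : (0 : ℂ) • f = 0 := by ext x; simp
      rw [this, hμ₂ 0 (by simp)]; simp
    · by_cases hP : f x₁ = f x₂ ∧ f x₁ ≠ f x₃
      · rw [hμ₁ f hP, hμ₁ (c • f) ⟨by simp [hP.1], by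
          simp only [ContinuousMap.smul_apply, smul_eq_mul, ne_eq, mul_right_cancel₀ hc]
          exact fun h => hP.2 (mul_left_cancel₀ hc h)⟩]
        simp
      · rw [hμ₂ f hP, hμ₂ (c • f) (by
          intro ⟨h1, h2⟩
          simp only [ContinuousMap.smul_apply, smul_eq_mul] at h1 h2
          exact hP ⟨mul_left_cancel₀ hc h1, fun h => h2 (by rw [h])⟩)]
        simp
  · intro f
    rw [hone]
    by_cases hP : f x₁ = f x₂ ∧ f x₁ ≠ f x₃
    · rw [hμ₁ f hP, hμ₁ (1 - f) ⟨by simp [hP.1], by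
        simp only [ContinuousMap.sub_apply, ContinuousMap.one_apply, ne_eq]
        exact fun h => hP.2 (by linear_combination -h)⟩]
      simp
    · rw [hμ₂ f hP, hμ₂ (1 - f) (by
        intro ⟨h1, h2⟩
        simp only [ContinuousMap.sub_apply, ContinuousMap.one_apply] at h1 h2
        exact hP ⟨by linear_combination -h1, fun h => h2 (by rw [h])⟩)]
      simp
  · -- Non-additivity
    obtain ⟨f, hf0, hf1⟩ := urysohnC (X := X) (s := {x₃}) (t := {x₁, x₂})
      isClosed_singleton (Set.Finite.isClosed (by simp))
      (by simp [Set.disjoint_left, h13.symm, h23.symm])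
    obtain ⟨g, hg0, hg1⟩ := urysohnC (X := X) (s := {x₁, x₃}) (t := {x₂})
      (Set.Finite.isClosed (by simp)) isClosed_singleton
      (by simp [Set.disjoint_left, h12, h23.symm])
    have hf1' : f x₁ = 1 := hf1 x₁ (by simp)
    have hf2 : f x₂ = 1 := hf1 x₂ (by simp)
    have hf3 : f x₃ = 0 := hf0 x₃ rfl
    have hg1' : g x₁ = 0 := hg0 x₁ (by simp)
    have hg2 : g x₂ = 1 := hg1 x₂ rfl
    have hg3 : g x₃ = 0 := hg0 x₃ (by simp)
    refine ⟨f, g, ?_⟩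
    have hmf : μ f = 1 := by
      rw [hμ₁ f ⟨by rw [hf1', hf2], by rw [hf1', hf3]; norm_num⟩, hf1']
    have hmg : μ g = 0 := by
      rw [hμ₂ g (by rw [hg1', hg2]; norm_num), hg3]
    have hmfg : μ (f + g) = 0 := by
      rw [hμ₂ (f + g) (by simp [hf1', hf2, hg1', hg2]), ContinuousMap.add_apply, hf3, hg3]
      ring
    rw [hmf, hmg, hmfg]; norm_num
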